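/- Let z ∈ ℂ with 0 < Re z < 1, let θ ∈ {3π/4, -π/4}, and let r_m be a real number with 0 < r_m. Then the function r₁ ↦ r₁^(Re z) · ‖∫_{r₁}^{r_m} f_l(t·exp(iθ))·exp(iθ) dt‖ tends to exp(θ·Im z)/(2π·‖z‖) as r₁ → 0⁺ (limit within (0, r_m)); in particular this limit is positive, so the straight-line integral diverges like r₁^(-Re z) as r₁ → 0. -/

import Mathlib

open Filter

/-- The left integrand `f_l(w) = w^(-z)·exp(-πi w²)/(exp(πi w) - exp(-πi w))`. -/
noncomputable def fl (z w : ℂ) : ℂ :=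
  w ^ (-z) * Complex.exp (-(Real.pi * Complex.I) * w ^ 2) /
    (Complex.exp (Real.pi * Complex.I * w) - Complex.exp (-(Real.pi * Complex.I) * w))


namespace FlAux
open Complex MeasureTheory intervalIntegral

lemma ray_log {t θ : ℝ} (ht : 0 < t) (hθ : θ ∈ Set.Ioc (-Real.pi) Real.pi) :
    Complex.log (↑t * Complex.exp (θ * I)) = ↑(Real.log t) + ↑θ * I := by
  have habs : ‖(↑t * Complex.exp (θ * I))‖ = t := by
    rw [norm_mul, norm_exp_ofReal_mul_I, norm_real, Real.norm_of_nonneg ht.le, mul_one]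
  have harg : Complex.arg (↑t * Complex.exp (θ * I)) = θ := by
    rw [arg_real_mul _ ht, Complex.exp_mul_I]
    exact arg_cos_add_sin_mul_I hθ
  rw [Complex.log, habs, harg]

lemma ray_cpow {t θ : ℝ} (ht : 0 < t) (hθ : θ ∈ Set.Ioc (-Real.pi) Real.pi) (s : ℂ) :
    (↑t * Complex.exp (θ * I)) ^ s = (↑t : ℂ) ^ s * Complex.exp (↑θ * I * s) := by
  have hw : (↑t : ℂ) * Complex.exp (θ * I) ≠ 0 :=
    mul_ne_zero (ofReal_ne_zero.2 ht.ne') (Complex.exp_ne_zero _)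
  rw [cpow_def_of_ne_zero hw, ray_log ht hθ,
    cpow_def_of_ne_zero (ofReal_ne_zero.2 ht.ne'), ← Complex.ofReal_log ht.le,
    ← Complex.exp_add, add_mul]

lemma ray_im {t θ : ℝ} : ((↑t : ℂ) * Complex.exp (θ * I)).im = t * Real.sin θ := by
  simp [Complex.mul_im, Complex.exp_ofReal_mul_I_im, Complex.exp_ofReal_mul_I_re]

lemma D_eq (w : ℂ) : Complex.exp (Real.pi * I * w) - Complex.exp (-(Real.pi * I) * w)
    = 2 * I * Complex.sin (Real.pi * w) := by
  rw [Complex.sin, show -(↑Real.pi * w) * I = -(↑Real.pi * I) * w from by ring,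
    show (↑Real.pi : ℂ) * w * I = ↑Real.pi * I * w from by ring]
  set a := Complex.exp (↑Real.pi * I * w)
  set b := Complex.exp (-(↑Real.pi * I) * w)
  linear_combination (a - b) * Complex.I_sq

lemma D_ne_zero {w : ℂ} (hw : w.im ≠ 0) :
    Complex.exp (Real.pi * I * w) - Complex.exp (-(Real.pi * I) * w) ≠ 0 := by
  rw [D_eq]
  intro h
  rcases mul_eq_zero.1 h with h' | h'
  · norm_num at h'
  · rw [Complex.sin_eq_zero_iff] at h'
    obtain ⟨k, hk⟩ := h'
    have hπ : (Real.pi : ℂ) ≠ 0 := ofReal_ne_zero.2 Real.pi_ne_zero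
    have hwk : w = (k : ℂ) := mul_left_cancel₀ hπ (by rw [hk]; ring)
    exact hw (by rw [hwk]; simp)

lemma near_bound {w : ℂ} (hw : w ≠ 0) (hsmall : ‖w‖ ≤ 1 / (2 * Real.pi)) :
    ‖(w * Complex.exp (-(Real.pi * I) * w ^ 2) /
        (Complex.exp (Real.pi * I * w) - Complex.exp (-(Real.pi * I) * w))
      - 1 / (2 * Real.pi * I))‖ ≤ 3 * ‖w‖ := by
  have hπ := Real.pi_pos
  have hπ3 := Real.pi_gt_three
  set r := ‖w‖ with hr
  have hr0 : 0 < r := norm_pos_iff.mpr hw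
  have h2πr : r * (2 * Real.pi) ≤ 1 := (le_div_iff₀ (by positivity)).1 hsmall
  have hw1 : r ≤ 1 := by nlinarith
  have hπr : Real.pi * r ≤ 1 / 2 := by nlinarith
  rw [show (-(↑Real.pi * I) : ℂ) * w = -(↑Real.pi * I * w) from by ring]
  set a : ℂ := ↑Real.pi * I * w with ha
  have haa : ‖a‖ = Real.pi * r := by
    rw [ha, norm_mul, norm_mul, norm_I, norm_real, Real.norm_of_nonneg hπ.le, mul_one]
  have ha1 : ‖a‖ ≤ 1 := by rw [haa]; linarith
  set b : ℂ := -(↑Real.pi * I) * w ^ 2 with hb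
  have hbb : ‖b‖ = Real.pi * r ^ 2 := by
    rw [hb, norm_mul, norm_neg, norm_mul, norm_pow, norm_I, norm_real,
      Real.norm_of_nonneg hπ.le, mul_one]
  have hb1 : ‖b‖ ≤ 1 := by rw [hbb]; nlinarith
  have hR1 : ‖Complex.exp a - 1 - a‖ ≤ ‖a‖ ^ 2 :=
    Complex.norm_exp_sub_one_sub_id_le ha1
  have hR2 : ‖Complex.exp (-a) - 1 - (-a)‖ ≤ ‖a‖ ^ 2 := by
    have := Complex.norm_exp_sub_one_sub_id_le (x := -a) (by rwa [norm_neg])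
    rwa [norm_neg a] at this
  set D : ℂ := Complex.exp a - Complex.exp (-a) with hD
  have hD2a : ‖D - 2 * a‖ ≤ 2 * (Real.pi * r) ^ 2 := by
    have hsp : D - 2 * a = (Complex.exp a - 1 - a) - (Complex.exp (-a) - 1 - (-a)) := by
      rw [hD]; ring
    rw [hsp]
    calc ‖_‖ ≤ ‖Complex.exp a - 1 - a‖ +
        ‖Complex.exp (-a) - 1 - (-a)‖ := norm_sub_le _ _
      _ ≤ 2 * (Real.pi * r) ^ 2 := by rw [← haa]; linarith
  have hEb : ‖Complex.exp b - 1‖ ≤ 2 * (Real.pi * r ^ 2) := by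
    have := Complex.norm_exp_sub_one_le hb1
    rwa [hbb] at this
  have hN : ‖2 * a * Complex.exp b - D‖ ≤ 6 * Real.pi ^ 2 * r ^ 2 := by
    have hsplit : 2 * a * Complex.exp b - D = 2 * a * (Complex.exp b - 1) - (D - 2 * a) := by
      ring
    rw [hsplit]
    calc ‖_‖ ≤ ‖2 * a * (Complex.exp b - 1)‖ +
        ‖D - 2 * a‖ := norm_sub_le _ _
      _ ≤ 2 * (Real.pi * r) * (2 * (Real.pi * r ^ 2)) + 2 * (Real.pi * r) ^ 2 := by
          have habs : ‖2 * a * (Complex.exp b - 1)‖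
              = 2 * (Real.pi * r) * ‖Complex.exp b - 1‖ := by
            rw [norm_mul, norm_mul, haa]; norm_num
          rw [habs]
          have h0 : (0:ℝ) ≤ 2 * (Real.pi * r) := by positivity
          nlinarith [norm_nonneg (Complex.exp b - 1)]
      _ ≤ 6 * Real.pi ^ 2 * r ^ 2 := by nlinarith
  have hDlow : Real.pi * r ≤ ‖D‖ := by
    have h2a : ‖2 * a‖ = 2 * (Real.pi * r) := by
      rw [norm_mul, haa]; norm_num
    have hle := norm_sub_norm_le (2 * a) (2 * a - D)
    rw [sub_sub_cancel, h2a, norm_sub_rev (2*a) D] at hle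
    nlinarith [mul_le_mul_of_nonneg_left hπr (by positivity : (0:ℝ) ≤ 2*(Real.pi*r))]
  have hDpos : 0 < ‖D‖ := lt_of_lt_of_le (by positivity) hDlow
  have hDne : D ≠ 0 := fun h => by rw [h] at hDpos; simp at hDpos
  have h2πI : (2 : ℂ) * ↑Real.pi * I ≠ 0 := by
    simp [Real.pi_ne_zero, Complex.ext_iff]
  have hkey : w * Complex.exp b / D - 1 / (2 * ↑Real.pi * I)
      = (2 * a * Complex.exp b - D) / (2 * ↑Real.pi * I * D) := by
    field_simp
    ring
  rw [hkey, norm_div]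
  have habs2 : ‖2 * ↑Real.pi * I * D‖ = 2 * Real.pi * ‖D‖ := by
    rw [norm_mul, norm_mul, norm_mul, norm_I, norm_real, Real.norm_of_nonneg hπ.le]
    norm_num
  rw [habs2, div_le_iff₀ (by positivity)]
  calc ‖2 * a * Complex.exp b - D‖ ≤ 6 * Real.pi ^ 2 * r ^ 2 := hN
    _ ≤ 3 * r * (2 * Real.pi * (Real.pi * r)) := by ring_nf; nlinarith
    _ ≤ 3 * r * (2 * Real.pi * ‖D‖) := by
        have hge : (0:ℝ) ≤ 3 * r * (2 * Real.pi) := by positivity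
        nlinarith

lemma decomp (z : ℂ) {θ t : ℝ} (ht : 0 < t) (hθ : θ ∈ Set.Ioc (-Real.pi) Real.pi) :
    fl z (↑t * Complex.exp (θ * I)) * Complex.exp (θ * I)
      = (↑t : ℂ) ^ (-z - 1) * Complex.exp (-(z * ↑θ * I)) *
        ((↑t * Complex.exp (θ * I)) *
            Complex.exp (-(Real.pi * I) * (↑t * Complex.exp (θ * I)) ^ 2) /
          (Complex.exp (Real.pi * I * (↑t * Complex.exp (θ * I))) -
            Complex.exp (-(Real.pi * I) * (↑t * Complex.exp (θ * I))))) := by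
  unfold fl
  rw [ray_cpow ht hθ (-z)]
  have hts : (↑t : ℂ) ^ (-z) = (↑t : ℂ) ^ (-z - 1) * ↑t := by
    have h := cpow_add (-z - 1) 1 (ofReal_ne_zero.2 ht.ne')
    rw [cpow_one] at h
    rw [← h]; congr 1; ring
  rw [hts, show -(z * ↑θ * I) = ↑θ * I * (-z) from by ring]
  ring

/-- The uniform error bound `‖fl·e^{iθ} - c'·t^{-z-1}‖ ≤ M·t^{-Re z}` on `(0, rm]`. -/
lemma error_bound (z : ℂ) {θ rm : ℝ} (hθ : θ ∈ Set.Ioc (-Real.pi) Real.pi)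
    (hsin : Real.sin θ ≠ 0) (hrm : 0 < rm) :
    ∃ M : ℝ, 0 ≤ M ∧ ∀ t ∈ Set.Ioc (0:ℝ) rm,
      ‖fl z (↑t * Complex.exp (θ * I)) * Complex.exp (θ * I)
        - Complex.exp (-(z * ↑θ * I)) / (2 * ↑Real.pi * I) * (↑t : ℂ) ^ (-z - 1)‖
      ≤ M * t ^ (-z.re) := by
  have hπ := Real.pi_pos
  set e : ℂ := Complex.exp (↑θ * I) with he
  set ψ : ℝ → ℂ := fun t => (↑t * e) * Complex.exp (-(Real.pi * I) * (↑t * e) ^ 2) /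
      (Complex.exp (Real.pi * I * (↑t * e)) - Complex.exp (-(Real.pi * I) * (↑t * e)))
      - 1 / (2 * ↑Real.pi * I) with hψ
  set δ : ℝ := min rm (1 / (2 * Real.pi)) with hδ
  have hδ0 : 0 < δ := lt_min hrm (by positivity)
  -- compact bound on [δ, rm]
  have hwim : ∀ t : ℝ, 0 < t → ((↑t : ℂ) * e).im ≠ 0 := fun t ht => by
    rw [he, ray_im]; exact mul_ne_zero ht.ne' hsin
  have hcont : ContinuousOn ψ (Set.Icc δ rm) := by
    apply ContinuousOn.sub _ continuousOn_const
    apply ContinuousOn.div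
    · fun_prop
    · fun_prop
    · intro t ht
      exact D_ne_zero (hwim t (lt_of_lt_of_le hδ0 ht.1))
  obtain ⟨C, hC⟩ := (isCompact_Icc).exists_bound_of_continuousOn hcont
  have hC0 : 0 ≤ C := le_trans (norm_nonneg _) (hC δ ⟨le_refl _, min_le_left _ _⟩)
  refine ⟨Real.exp (θ * z.im) * max 3 (C / δ), by positivity, fun t ht => ?_⟩
  have ht0 : 0 < t := ht.1
  have htne : ((↑t : ℂ)) ≠ 0 := ofReal_ne_zero.2 ht0.ne'
  -- rewrite the error as t^{-z-1}·e^{-izθ}·ψ t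
  have herr : fl z (↑t * e) * e
      - Complex.exp (-(z * ↑θ * I)) / (2 * ↑Real.pi * I) * (↑t : ℂ) ^ (-z - 1)
      = (↑t : ℂ) ^ (-z - 1) * Complex.exp (-(z * ↑θ * I)) * ψ t := by
    rw [decomp z ht0 hθ, hψ]
    ring
  rw [herr]
  rw [norm_mul, norm_mul]
  have habs1 : ‖(↑t : ℂ) ^ (-z - 1)‖ = t ^ (-z.re - 1) := by
    rw [Complex.norm_cpow_eq_rpow_re_of_pos ht0]
    norm_num
  have habs2 : ‖Complex.exp (-(z * ↑θ * I))‖ = Real.exp (θ * z.im) := by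
    rw [Complex.norm_exp]
    congr 1
    simp [Complex.mul_re, Complex.mul_im]
    ring
  rw [habs1, habs2]
  have hrpow : t ^ (-z.re - 1) * t = t ^ (-z.re) := by
    rw [← Real.rpow_add_one ht0.ne' (-z.re - 1)]
    norm_num
  have hψb : ‖ψ t‖ ≤ max 3 (C / δ) * t := by
    rcases le_or_gt t δ with hcase | hcase
    · have hwne : (↑t : ℂ) * e ≠ 0 := fun h => hwim t ht0 (by rw [h]; simp)
      have hws : ‖(↑t : ℂ) * e‖ ≤ 1 / (2 * Real.pi) := by
        rw [he, norm_mul, norm_exp_ofReal_mul_I, norm_real, Real.norm_of_nonneg ht0.le, mul_one]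
        exact le_trans hcase (min_le_right _ _)
      have hb := near_bound hwne hws
      rw [norm_mul, norm_exp_ofReal_mul_I, norm_real, Real.norm_of_nonneg ht0.le, mul_one] at hb
      have hb' : ‖ψ t‖ ≤ 3 * t := hb
      calc ‖ψ t‖ ≤ 3 * t := hb'
        _ ≤ max 3 (C / δ) * t := by
            nlinarith [le_max_left 3 (C / δ), ht0]
    · have hb : ‖ψ t‖ ≤ C := hC t ⟨hcase.le, ht.2⟩
      calc ‖ψ t‖ ≤ C := hb
        _ = C / δ * δ := by field_simp
        _ ≤ C / δ * t := by nlinarith [div_nonneg hC0 hδ0.le]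
        _ ≤ max 3 (C / δ) * t := by nlinarith [le_max_right 3 (C / δ), ht0]
  calc t ^ (-z.re - 1) * Real.exp (θ * z.im) * ‖ψ t‖
      ≤ t ^ (-z.re - 1) * Real.exp (θ * z.im) * (max 3 (C / δ) * t) := by
        exact mul_le_mul_of_nonneg_left hψb
          (mul_nonneg (Real.rpow_nonneg ht0.le _) (Real.exp_pos _).le)
    _ = Real.exp (θ * z.im) * max 3 (C / δ) * (t ^ (-z.re - 1) * t) := by ring
    _ = Real.exp (θ * z.im) * max 3 (C / δ) * t ^ (-z.re) := by rw [hrpow]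



lemma f1_integrable (z : ℂ) {θ : ℝ} (hsin : Real.sin θ ≠ 0) {r₁ rm : ℝ}
    (hr : 0 < r₁) (hle : r₁ ≤ rm) :
    IntervalIntegrable (fun t : ℝ => fl z (↑t * Complex.exp (θ * I)) * Complex.exp (θ * I))
      MeasureTheory.volume r₁ rm := by
  apply ContinuousOn.intervalIntegrable
  rw [Set.uIcc_of_le hle]
  have hwim : ∀ t ∈ Set.Icc r₁ rm, ((↑t : ℂ) * Complex.exp (θ * I)).im ≠ 0 := fun t ht => by
    rw [ray_im]; exact mul_ne_zero (lt_of_lt_of_le hr ht.1).ne' hsin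
  apply ContinuousOn.mul _ continuousOn_const
  unfold fl
  apply ContinuousOn.div
  · apply ContinuousOn.mul
    · intro t ht
      have hca : ContinuousAt (fun w : ℂ => w ^ (-z)) (↑t * Complex.exp (θ * I)) :=
        continuousAt_cpow_const (Complex.mem_slitPlane_iff.2 (Or.inr (hwim t ht)))
      have hgc : Continuous fun s : ℝ => (↑s : ℂ) * Complex.exp (θ * I) := by fun_prop
      have hcomp := ContinuousAt.comp
        (f := fun s : ℝ => (↑s : ℂ) * Complex.exp (θ * I)) (x := t) hca hgc.continuousAt
      exact hcomp.continuousWithinAt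
    · fun_prop
  · fun_prop
  · intro t ht; exact D_ne_zero (hwim t ht)

lemma main (z : ℂ) (h0 : 0 < z.re) (h1 : z.re < 1)
    (θ : ℝ) (hθ : θ = 3 * Real.pi / 4 ∨ θ = -(Real.pi / 4))
    (rm : ℝ) (hrm : 0 < rm) :
    Tendsto (fun r₁ : ℝ => r₁ ^ z.re *
        ‖∫ t in r₁..rm, fl z (t * Complex.exp (θ * Complex.I)) *
            Complex.exp (θ * Complex.I)‖)
      (nhdsWithin 0 (Set.Ioo 0 rm))
      (nhds (Real.exp (θ * z.im) / (2 * Real.pi * ‖z‖))) ∧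
    0 < Real.exp (θ * z.im) / (2 * Real.pi * ‖z‖) := by
  have hπ := Real.pi_pos
  have hz0 : z ≠ 0 := fun h => by rw [h] at h0; simp at h0
  have hIoc : θ ∈ Set.Ioc (-Real.pi) Real.pi := by
    rcases hθ with h | h <;> constructor <;> rw [h] <;> linarith
  have hsin : Real.sin θ ≠ 0 := by
    rcases hθ with h | h
    · rw [h]
      exact (Real.sin_pos_of_pos_of_lt_pi (by linarith) (by linarith)).ne'
    · rw [h, Real.sin_neg]
      exact neg_ne_zero.2 (Real.sin_pos_of_pos_of_lt_pi (by linarith) (by linarith)).ne'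
  obtain ⟨M, hM0, hM⟩ := error_bound z hIoc hsin hrm
  set e : ℂ := Complex.exp (↑θ * Complex.I) with he
  set c' : ℂ := Complex.exp (-(z * ↑θ * Complex.I)) / (2 * ↑Real.pi * Complex.I) with hc'
  set L : ℂ := c' / z with hL
  set K : ℝ := M * rm ^ (1 - z.re) / (1 - z.re) with hK
  set f₁ : ℝ → ℂ := fun t => fl z (↑t * e) * e with hf₁
  set E : ℝ → ℂ := fun t => f₁ t - c' * (↑t : ℂ) ^ (-z - 1) with hE
  -- positivity of the limit
  have hpos : 0 < Real.exp (θ * z.im) / (2 * Real.pi * ‖z‖) :=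
    div_pos (Real.exp_pos _) (mul_pos (by positivity) (norm_pos_iff.2 hz0))
  -- norm of L
  have hLnorm : ‖L‖ = Real.exp (θ * z.im) / (2 * Real.pi * ‖z‖) := by
    rw [hL, hc', norm_div, norm_div]
    have hand1 : ‖Complex.exp (-(z * ↑θ * Complex.I))‖ = Real.exp (θ * z.im) := by
      rw [Complex.norm_exp]
      congr 1
      simp [Complex.mul_re, Complex.mul_im]
      ring
    have hand2 : ‖(2 : ℂ) * ↑Real.pi * Complex.I‖ = 2 * Real.pi := by
      rw [norm_mul, norm_mul, Complex.norm_I, Complex.norm_real,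
        Real.norm_of_nonneg hπ.le]
      norm_num
    rw [hand1, hand2, div_div]
  -- per-r₁ facts
  have hbase : ∀ r₁ ∈ Set.Ioo (0:ℝ) rm,
      (∫ t in r₁..rm, f₁ t) = c' * ((↑rm : ℂ) ^ (-z) / (-z) - (↑r₁ : ℂ) ^ (-z) / (-z))
        + ∫ t in r₁..rm, E t ∧
      ‖∫ t in r₁..rm, E t‖ ≤ K := by
    intro r₁ hr
    have hr0 : 0 < r₁ := hr.1
    have hle : r₁ ≤ rm := hr.2.le
    have h0mem : (0:ℝ) ∉ Set.uIcc r₁ rm := by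
      rw [Set.uIcc_of_le hle]; exact fun h => absurd h.1 (not_le.2 hr0)
    have hf1 : IntervalIntegrable f₁ volume r₁ rm := f1_integrable z hsin hr0 hle
    have hf2 : IntervalIntegrable (fun t : ℝ => (↑t : ℂ) ^ (-z - 1)) volume r₁ rm :=
      intervalIntegrable_cpow (Or.inr h0mem)
    have hfE : IntervalIntegrable E volume r₁ rm := hf1.sub (hf2.const_mul c')
    have hFTC : (∫ t in r₁..rm, (↑t : ℂ) ^ (-z - 1))
        = (↑rm : ℂ) ^ (-z) / (-z) - (↑r₁ : ℂ) ^ (-z) / (-z) := by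
      apply intervalIntegral.integral_eq_sub_of_hasDerivAt
        (f := fun y : ℝ => (↑y : ℂ) ^ (-z) / (-z)) _ hf2
      intro x hx
      rw [Set.uIcc_of_le hle] at hx
      have hx0 : x ≠ 0 := (lt_of_lt_of_le hr0 hx.1).ne'
      have hne : -z - 1 ≠ -1 := fun h => hz0 (by linear_combination -h)
      have hd := hasDerivAt_ofReal_cpow_const' hx0 hne
      rwa [show -z - 1 + 1 = -z from by ring] at hd
    have hsum : (∫ t in r₁..rm, f₁ t)
        = (∫ t in r₁..rm, c' * (↑t : ℂ) ^ (-z - 1)) + ∫ t in r₁..rm, E t := by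
      rw [← intervalIntegral.integral_add (hf2.const_mul c') hfE]
      congr 1
      funext t
      rw [hE]
      ring
    have hval : (∫ t in r₁..rm, c' * (↑t : ℂ) ^ (-z - 1))
        = c' * ((↑rm : ℂ) ^ (-z) / (-z) - (↑r₁ : ℂ) ^ (-z) / (-z)) := by
      rw [intervalIntegral.integral_const_mul, hFTC]
    have hg_int : IntervalIntegrable (fun t : ℝ => M * t ^ (-z.re)) volume r₁ rm :=
      (intervalIntegrable_rpow' (by linarith)).const_mul M
    have hEbd : ‖∫ t in r₁..rm, E t‖ ≤ |∫ t in r₁..rm, M * t ^ (-z.re)| := by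
      apply intervalIntegral.norm_integral_le_abs_of_norm_le _ hg_int
      refine (MeasureTheory.ae_restrict_iff' measurableSet_uIoc).2
        (MeasureTheory.ae_of_all _ fun t ht => ?_)
      rw [Set.uIoc_of_le hle] at ht
      have htm : t ∈ Set.Ioc (0:ℝ) rm := ⟨lt_trans hr0 ht.1, ht.2⟩
      rw [hE]
      exact hM t htm
    have hgval : (∫ t in r₁..rm, M * t ^ (-z.re))
        = M * ((rm ^ (-z.re + 1) - r₁ ^ (-z.re + 1)) / (-z.re + 1)) := by
      rw [intervalIntegral.integral_const_mul, integral_rpow (Or.inl (by linarith))]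
    have hmono : r₁ ^ (-z.re + 1) ≤ rm ^ (-z.re + 1) :=
      Real.rpow_le_rpow hr0.le hle (by linarith)
    have hrm1 : (0:ℝ) ≤ r₁ ^ (-z.re + 1) := Real.rpow_nonneg hr0.le _
    have habs : |∫ t in r₁..rm, M * t ^ (-z.re)| ≤ K := by
      rw [hgval, _root_.abs_of_nonneg (mul_nonneg hM0
        (div_nonneg (by linarith) (by linarith)))]
      rw [hK, show (1:ℝ) - z.re = -z.re + 1 from by ring, mul_div_assoc]
      apply mul_le_mul_of_nonneg_left _ hM0
      have hsub : rm ^ (-z.re + 1) - r₁ ^ (-z.re + 1) ≤ rm ^ (-z.re + 1) := by linarith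
      exact (div_le_div_iff_of_pos_right (by linarith)).2 hsub
    exact ⟨by rw [hsum, hval], le_trans hEbd habs⟩
  -- limit of r₁ ^ z.re
  have hra : Tendsto (fun r : ℝ => r ^ z.re) (nhdsWithin 0 (Set.Ioo 0 rm)) (nhds 0) := by
    have hca : ContinuousAt (fun r : ℝ => r ^ z.re) 0 :=
      Real.continuousAt_rpow_const 0 z.re (Or.inr h0.le)
    have := hca.tendsto
    rw [Real.zero_rpow h0.ne'] at this
    exact this.mono_left nhdsWithin_le_nhds
  -- limit of (r₁:ℂ)^z
  have hcz : Tendsto (fun r : ℝ => (↑r : ℂ) ^ z) (nhdsWithin 0 (Set.Ioo 0 rm)) (nhds 0) := by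
    apply squeeze_zero_norm' _ hra
    refine eventually_nhdsWithin_of_forall fun r hr => ?_
    rw [Complex.norm_cpow_eq_rpow_re_of_pos hr.1]
  -- limit of (r₁:ℂ)^z * ∫E
  have hE0 : Tendsto (fun r₁ : ℝ => (↑r₁ : ℂ) ^ z * ∫ t in r₁..rm, E t)
      (nhdsWithin 0 (Set.Ioo 0 rm)) (nhds 0) := by
    apply squeeze_zero_norm' _ (by simpa using hra.mul_const K)
    refine eventually_nhdsWithin_of_forall fun r hr => ?_
    rw [norm_mul, Complex.norm_cpow_eq_rpow_re_of_pos hr.1]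
    exact mul_le_mul_of_nonneg_left (hbase r hr).2 (Real.rpow_nonneg hr.1.le _)
  -- the complex-valued limit
  have hGlim : Tendsto (fun r₁ : ℝ => (↑r₁ : ℂ) ^ z * ∫ t in r₁..rm, f₁ t)
      (nhdsWithin 0 (Set.Ioo 0 rm)) (nhds L) := by
    have hnice : Tendsto (fun r₁ : ℝ =>
        L + ((c' * ((↑rm : ℂ) ^ (-z) / (-z))) * (↑r₁ : ℂ) ^ z
          + (↑r₁ : ℂ) ^ z * ∫ t in r₁..rm, E t))
        (nhdsWithin 0 (Set.Ioo 0 rm)) (nhds L) := by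
      have h2 := (hcz.const_mul (c' * ((↑rm : ℂ) ^ (-z) / (-z)))).add hE0
      have h3 := (tendsto_const_nhds
          (x := L) (f := nhdsWithin (0:ℝ) (Set.Ioo 0 rm))).add h2
      simpa using h3
    apply hnice.congr'
    refine eventually_nhdsWithin_of_forall fun r₁ hr => ?_
    dsimp only
    have hr0 : 0 < r₁ := hr.1
    have hcc : (↑r₁ : ℂ) ^ z * (↑r₁ : ℂ) ^ (-z) = 1 := by
      rw [← Complex.cpow_add _ _ (Complex.ofReal_ne_zero.2 hr0.ne')]
      simp
    rw [(hbase r₁ hr).1, hL]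
    have hexpand : (↑r₁ : ℂ) ^ z *
        (c' * ((↑rm : ℂ) ^ (-z) / (-z) - (↑r₁ : ℂ) ^ (-z) / (-z)) + ∫ t in r₁..rm, E t)
        = c' / z * ((↑r₁ : ℂ) ^ z * (↑r₁ : ℂ) ^ (-z))
          + (c' * ((↑rm : ℂ) ^ (-z) / (-z))) * (↑r₁ : ℂ) ^ z
          + (↑r₁ : ℂ) ^ z * ∫ t in r₁..rm, E t := by
      ring
    rw [hexpand, hcc, mul_one]
    ring
  constructor
  · have hnorm := hGlim.norm
    rw [hLnorm] at hnorm
    apply hnorm.congr'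
    refine eventually_nhdsWithin_of_forall fun r₁ hr => ?_
    dsimp only
    rw [norm_mul, Complex.norm_cpow_eq_rpow_re_of_pos hr.1]
  · exact hpos

end FlAux

/-- Paper's Lemma 3.1 (left contour, segments C̃_lp, C̃_ln): along the rays at
angles `3π/4` and `-π/4`, the straight-line integral of `f_l` from `r₁` to `r_m`
diverges like `r₁^(-Re z)` as `r₁ → 0⁺`; more precisely
`r₁^(Re z)·‖∫_{r₁}^{r_m} f_l(t·e^{iθ})·e^{iθ} dt‖ → exp(θ·Im z)/(2π‖z‖)`,
a positive limit. -/
theorem fl_segment_singularity (z : ℂ) (h0 : 0 < z.re) (h1 : z.re < 1)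
    (θ : ℝ) (hθ : θ = 3 * Real.pi / 4 ∨ θ = -(Real.pi / 4))
    (rm : ℝ) (hrm : 0 < rm) :
    Tendsto (fun r₁ : ℝ => r₁ ^ z.re *
        ‖∫ t in r₁..rm, fl z (t * Complex.exp (θ * Complex.I)) *
            Complex.exp (θ * Complex.I)‖)
      (nhdsWithin 0 (Set.Ioo 0 rm))
      (nhds (Real.exp (θ * z.im) / (2 * Real.pi * ‖z‖))) ∧
    0 < Real.exp (θ * z.im) / (2 * Real.pi * ‖z‖) :=
  FlAux.main z h0 h1 θ hθ rm hrm
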